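/- Exact Pauli-Lindblad parameters λ_y and λ_z for the noisy √X gate: let A > 0, γ ≥ 0, γ_φ ≥ 0, t_g = π/(2A). Let H = A·X/2, U = exp(−i·H·t_g) (matrix exponential), and let 𝓛 be the linear map on 2×2 complex matrices 𝓛(ρ) = −i·(H·ρ − ρ·H) + γ·(σ₋ ρ σ₊ − ½(σ₊σ₋·ρ + ρ·σ₊σ₋)) + γ_φ·(Z ρ Z − ρ). Define the error channel E(ρ) = U†·(exp(t_g·𝓛)(ρ))·U and its Pauli eigenvalues f_x, f_y, f_z. Then f_x = exp(−(γ/2 + 2γ_φ)·t_g) and f_y = f_z; consequently, if f_y > 0 then the Pauli-Lindblad parameters satisfy λ_y = λ_z = γ·t_g/8 + γ_φ·t_g/2. -/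

import Mathlib

set_option maxHeartbeats 2000000
set_option synthInstance.maxHeartbeats 400000

attribute [local instance] Matrix.linftyOpNormedAddCommGroup Matrix.linftyOpNormedRing
  Matrix.linftyOpNormedAlgebra

/-- The space of 2×2 complex matrices. -/
abbrev M2 : Type := Matrix (Fin 2) (Fin 2) ℂ

def Xm : M2 := !![0, 1; 1, 0]
def Ym : M2 := !![0, -Complex.I; Complex.I, 0]
def Zm : M2 := !![1, 0; 0, -1]

/-- The Hadamard jump operator `L_φ = (X + Z)/√2`. -/
noncomputable def Lφ : M2 := ((Real.sqrt 2 : ℝ) : ℂ)⁻¹ • (Xm + Zm)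

/-- The lowering operator `σ₋`. -/
def σm : M2 := !![0, 1; 0, 0]

/-- The raising operator `σ₊`. -/
def σp : M2 := !![0, 0; 1, 0]

instance : SMulCommClass ℂ (M2 →L[ℂ] M2) (M2 →L[ℂ] M2) :=
  ⟨fun c T S => by
    ext ρ
    simp [smul_eq_mul, ContinuousLinearMap.mul_apply]⟩
instance : IsScalarTower ℂ (M2 →L[ℂ] M2) (M2 →L[ℂ] M2) :=
  ⟨fun c T S => by
    ext ρ
    simp [smul_eq_mul, ContinuousLinearMap.mul_apply]⟩

noncomputable instance instNRM : NormedRing (M2 →L[ℂ] M2) := ContinuousLinearMap.toNormedRing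
noncomputable instance : NormedAlgebra ℂ (M2 →L[ℂ] M2) := ContinuousLinearMap.toNormedAlgebra
instance : IsTopologicalRing (M2 →L[ℂ] M2) := @NonUnitalSeminormedRing.toIsTopologicalRing _
  ContinuousLinearMap.toSeminormedRing.toNonUnitalSeminormedRing
instance : @CompleteSpace (M2 →L[ℂ] M2) instNRM.toSeminormedRing.toPseudoMetricSpace.toUniformSpace :=
  letI : NormedAddCommGroup (M2 →L[ℂ] M2) := instNRM.toNonUnitalNormedRing.toNormedAddCommGroup
  @FiniteDimensional.complete ℂ (M2 →L[ℂ] M2) _ _ _ _ _ (SeminormedAddCommGroup.to_isUniformAddGroup) _ _ _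

section Aux

-- trace facts
lemma trYm : Matrix.trace Ym = 0 := by
  simp [Ym, Matrix.trace_fin_two]
lemma trZm : Matrix.trace Zm = 0 := by
  simp [Zm, Matrix.trace_fin_two]
lemma trXm : Matrix.trace Xm = 0 := by
  simp [Xm, Matrix.trace_fin_two]
lemma trXY : Matrix.trace (Xm * Ym) = 0 := by
  simp [Xm, Ym, Matrix.trace_fin_two, Matrix.mul_apply, Fin.sum_univ_two]
lemma trXZ : Matrix.trace (Xm * Zm) = 0 := by
  simp [Xm, Zm, Matrix.trace_fin_two, Matrix.mul_apply, Fin.sum_univ_two]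
lemma trYX : Matrix.trace (Ym * Xm) = 0 := by
  simp [Xm, Ym, Matrix.trace_fin_two, Matrix.mul_apply, Fin.sum_univ_two]
lemma trZX : Matrix.trace (Zm * Xm) = 0 := by
  simp [Xm, Zm, Matrix.trace_fin_two, Matrix.mul_apply, Fin.sum_univ_two]
lemma trXX : Matrix.trace (Xm * Xm) = 2 := by
  simp [Xm, Matrix.trace_fin_two, Matrix.mul_apply, Fin.sum_univ_two]
  norm_num
lemma trYY : Matrix.trace (Ym * Ym) = 2 := by
  simp [Ym, Matrix.trace_fin_two, Matrix.mul_apply, Fin.sum_univ_two]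
  ring_nf
lemma trYZ : Matrix.trace (Ym * Zm) = 0 := by
  simp [Ym, Zm, Matrix.trace_fin_two, Matrix.mul_apply, Fin.sum_univ_two]
lemma trZY : Matrix.trace (Zm * Ym) = 0 := by
  simp [Ym, Zm, Matrix.trace_fin_two, Matrix.mul_apply, Fin.sum_univ_two]
lemma trZZ : Matrix.trace (Zm * Zm) = 2 := by
  simp [Zm, Matrix.trace_fin_two, Matrix.mul_apply, Fin.sum_univ_two]
  norm_num

-- Pauli decomposition of an arbitrary 2x2 matrix
lemma pauli_decomp (M : M2) :
    M = ((1/2 : ℂ) * Matrix.trace M) • (1 : M2)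
      + ((1/2 : ℂ) * Matrix.trace (Xm * M)) • Xm
      + ((1/2 : ℂ) * Matrix.trace (Ym * M)) • Ym
      + ((1/2 : ℂ) * Matrix.trace (Zm * M)) • Zm := by
  ext i j
  fin_cases i <;> fin_cases j <;>
    simp [Xm, Ym, Zm, Matrix.trace_fin_two, Matrix.mul_apply, Fin.sum_univ_two,
      Matrix.one_apply, Matrix.vecMul, dotProduct] <;> ring_nf <;>
    simp [Complex.I_sq] <;> ring

noncomputable def Pu : (M2)ˣ :=
  ⟨!![1, 1; 1, -1], !![1/2, 1/2; 1/2, -1/2], by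
    ext i j; fin_cases i <;> fin_cases j <;>
      simp [Matrix.mul_apply, Fin.sum_univ_two, Matrix.one_apply] <;> norm_num, by
    ext i j; fin_cases i <;> fin_cases j <;>
      simp [Matrix.mul_apply, Fin.sum_univ_two, Matrix.one_apply] <;> norm_num⟩

lemma exp_smul_Xm (c : ℂ) :
    NormedSpace.exp (c • Xm) = !![Complex.cosh c, Complex.sinh c;
                                    Complex.sinh c, Complex.cosh c] := by
  have h1 : c • Xm = (Pu : M2) * (Matrix.diagonal ![c, -c]) * ((Pu⁻¹ : (M2)ˣ) : M2) := by
    ext i j; fin_cases i <;> fin_cases j <;>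
      simp [Pu, Xm, Matrix.mul_apply, Fin.sum_univ_two, Matrix.diagonal,
        Matrix.vecHead, Matrix.vecTail] <;> ring
  rw [h1, Matrix.exp_units_conj, Matrix.exp_diagonal]
  ext i j
  have hcosh : Complex.cosh c = (Complex.exp c + Complex.exp (-c))/2 := rfl
  have hsinh : Complex.sinh c = (Complex.exp c - Complex.exp (-c))/2 := rfl
  fin_cases i <;> fin_cases j <;>
    simp [Pu, Matrix.mul_apply, Fin.sum_univ_two, Matrix.diagonal, Matrix.vecHead,
      Matrix.vecTail, ← Complex.exp_eq_exp_ℂ, hcosh, hsinh] <;> ring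

noncomputable def sC : ℂ := ((Real.sqrt 2 / 2 : ℝ) : ℂ)
noncomputable def Ud : M2 := !![sC, -sC*Complex.I; -sC*Complex.I, sC]

lemma sC_sq : sC ^ 2 = 1/2 := by
  have : (Real.sqrt 2) ^ 2 = 2 := Real.sq_sqrt (by norm_num)
  simp only [sC]
  rw [← Complex.ofReal_pow]
  norm_num [div_pow, this]

lemma Ud_conjT : Ud.conjTranspose = !![sC, sC*Complex.I; sC*Complex.I, sC] := by
  ext i j; fin_cases i <;> fin_cases j <;>
    simp [Ud, sC, Matrix.conjTranspose_apply, Complex.ext_iff]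

lemma T1 : (1/2 : ℂ) * Matrix.trace (Xm * (Ud.conjTranspose * Xm * Ud)) = 1 := by
  rw [Ud_conjT]
  simp [Ud, Xm, Matrix.trace_fin_two, Matrix.mul_apply, Fin.sum_univ_two]
  ring_nf
  simp [Complex.I_sq]
  all_goals first
  | ring1
  | linear_combination sC_sq
  | linear_combination (-1 : ℂ) * sC_sq
  | linear_combination 2 * sC_sq
  | linear_combination (-2 : ℂ) * sC_sq
  | linear_combination 4 * sC_sq
  | linear_combination (-4 : ℂ) * sC_sq

lemma T2 : (1/2 : ℂ) * Matrix.trace (Ym * (Ud.conjTranspose * Ym * Ud)) = 0 := by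
  rw [Ud_conjT]
  simp [Ud, Ym, Matrix.trace_fin_two, Matrix.mul_apply, Fin.sum_univ_two]
  ring_nf
  simp [Complex.I_sq]
  all_goals first
  | ring1
  | linear_combination sC_sq
  | linear_combination (-1 : ℂ) * sC_sq
  | linear_combination 2 * sC_sq
  | linear_combination (-2 : ℂ) * sC_sq
  | linear_combination 4 * sC_sq
  | linear_combination (-4 : ℂ) * sC_sq

lemma T3 : (1/2 : ℂ) * Matrix.trace (Ym * (Ud.conjTranspose * Zm * Ud)) = 1 := by
  rw [Ud_conjT]
  simp [Ud, Ym, Zm, Matrix.trace_fin_two, Matrix.mul_apply, Fin.sum_univ_two]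
  ring_nf
  simp [Complex.I_sq]
  all_goals first
  | ring1
  | linear_combination sC_sq
  | linear_combination (-1 : ℂ) * sC_sq
  | linear_combination 2 * sC_sq
  | linear_combination (-2 : ℂ) * sC_sq
  | linear_combination 4 * sC_sq
  | linear_combination (-4 : ℂ) * sC_sq

lemma T4 : (1/2 : ℂ) * Matrix.trace (Zm * (Ud.conjTranspose * Ym * Ud)) = -1 := by
  rw [Ud_conjT]
  simp [Ud, Ym, Zm, Matrix.trace_fin_two, Matrix.mul_apply, Fin.sum_univ_two]
  ring_nf
  simp [Complex.I_sq]
  all_goals first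
  | ring1
  | linear_combination sC_sq
  | linear_combination (-1 : ℂ) * sC_sq
  | linear_combination 2 * sC_sq
  | linear_combination (-2 : ℂ) * sC_sq
  | linear_combination 4 * sC_sq
  | linear_combination (-4 : ℂ) * sC_sq

lemma T5 : (1/2 : ℂ) * Matrix.trace (Zm * (Ud.conjTranspose * Zm * Ud)) = 0 := by
  rw [Ud_conjT]
  simp [Ud, Zm, Matrix.trace_fin_two, Matrix.mul_apply, Fin.sum_univ_two]
  ring_nf
  simp [Complex.I_sq]
  all_goals first
  | ring1
  | linear_combination sC_sq
  | linear_combination (-1 : ℂ) * sC_sq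
  | linear_combination 2 * sC_sq
  | linear_combination (-2 : ℂ) * sC_sq
  | linear_combination 4 * sC_sq
  | linear_combination (-4 : ℂ) * sC_sq

/-- The trace functional `T ↦ trace (P * T ρ)` as a continuous linear map. -/
noncomputable def trFun (P ρ : M2) : (M2 →L[ℂ] M2) →L[ℂ] ℂ :=
  LinearMap.toContinuousLinearMap
    { toFun := fun T => Matrix.trace (P * T ρ)
      map_add' := by intro T S; simp [Matrix.mul_add]
      map_smul' := by intro c T; simp [Matrix.mul_smul] }

@[simp] lemma trFun_apply (P ρ : M2) (T : M2 →L[ℂ] M2) :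
    trFun P ρ T = Matrix.trace (P * T ρ) := by
  simp [trFun]

lemma trace_exp_term (𝓛 : M2 →L[ℂ] M2) (z : ℂ) (P ρ : M2) (n : ℕ) :
    trFun P ρ ((((n : ℕ).factorial : ℂ))⁻¹ • (z • 𝓛) ^ n)
      = (z ^ n * ((n.factorial : ℂ))⁻¹) * Matrix.trace (P * ((𝓛 ^ n) ρ)) := by
  have h1 : (z • 𝓛) ^ n = (z ^ n) • (𝓛 ^ n) := smul_pow z 𝓛 n
  rw [map_smul, h1]
  have h2 : ((z ^ n • 𝓛 ^ n : M2 →L[ℂ] M2)) ρ = (z ^ n) • ((𝓛 ^ n) ρ) := rfl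
  simp only [trFun_apply, h2]
  rw [Matrix.mul_smul, Matrix.trace_smul]
  rw [smul_eq_mul, smul_eq_mul]
  ring

lemma trace_exp_apply (𝓛 : M2 →L[ℂ] M2) (z : ℂ) (P ρ : M2) :
    Matrix.trace (P * (NormedSpace.exp (z • 𝓛) ρ))
      = ∑' n : ℕ, (z ^ n * ((n.factorial : ℂ))⁻¹) * Matrix.trace (P * ((𝓛 ^ n) ρ)) := by
  have hsum := NormedSpace.expSeries_summable' (𝕂 := ℂ) (z • 𝓛)
  have h0 : Matrix.trace (P * (NormedSpace.exp (z • 𝓛) ρ))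
      = trFun P ρ (NormedSpace.exp (z • 𝓛)) := by simp
  rw [h0, NormedSpace.exp_eq_tsum ℂ]
  beta_reduce
  refine ((trFun P ρ).map_tsum hsum).trans ?_
  exact tsum_congr (trace_exp_term 𝓛 z P ρ)

lemma trace_exp_summable (𝓛 : M2 →L[ℂ] M2) (z : ℂ) (P ρ : M2) :
    Summable (fun n : ℕ => (z ^ n * ((n.factorial : ℂ))⁻¹) * Matrix.trace (P * ((𝓛 ^ n) ρ))) := by
  have hsum := NormedSpace.expSeries_summable' (𝕂 := ℂ) (z • 𝓛)
  have := (trFun P ρ).summable hsum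
  exact this.congr (trace_exp_term 𝓛 z P ρ)

end Aux

theorem sqrtX_gate_PL_parameters (A γ γφ tg : ℝ)
    (hA : 0 < A) (hγ : 0 ≤ γ) (hγφ : 0 ≤ γφ) (htg : tg = Real.pi / (2 * A))
    (H : M2) (hH : H = ((A : ℂ) / 2) • Xm)
    (U : M2) (hU : U = NormedSpace.exp ((-Complex.I * (tg : ℂ)) • H))
    (𝓛 : M2 →L[ℂ] M2)
    (h𝓛 : ∀ ρ : M2, 𝓛 ρ = (-Complex.I) • (H * ρ - ρ * H)
        + (γ : ℂ) • (σm * ρ * σp - (1 / 2 : ℂ) • (σp * σm * ρ + ρ * (σp * σm)))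
        + (γφ : ℂ) • (Zm * ρ * Zm - ρ))
    (E : M2 → M2)
    (hE : ∀ ρ : M2, E ρ = U.conjTranspose * (@NormedSpace.exp _ _ _ (@NonUnitalSeminormedRing.toIsTopologicalRing _
      ContinuousLinearMap.toSeminormedRing.toNonUnitalSeminormedRing) (tg • 𝓛) ρ) * U)
    (fx fy fz : ℝ)
    (hfx : (fx : ℂ) = (1 / 2 : ℂ) * Matrix.trace (Xm * E Xm))
    (hfy : (fy : ℂ) = (1 / 2 : ℂ) * Matrix.trace (Ym * E Ym))
    (hfz : (fz : ℂ) = (1 / 2 : ℂ) * Matrix.trace (Zm * E Zm)) :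
    fx = Real.exp (-(γ / 2 + 2 * γφ) * tg) ∧
    fy = fz ∧
    (0 < fy →
      (1 / 4 : ℝ) * (-Real.log fx + Real.log fy - Real.log fz)
          = γ * tg / 8 + γφ * tg / 2 ∧
      (1 / 4 : ℝ) * (-Real.log fx - Real.log fy + Real.log fz)
          = γ * tg / 8 + γφ * tg / 2) := by
  have hE : ∀ ρ : M2, E ρ = U.conjTranspose * (NormedSpace.exp (tg • 𝓛) ρ) * U := hE
  set kc : ℂ := (γ : ℂ)/2 + 2*(γφ : ℂ) with hkc
  -- action of 𝓛 on the Pauli matrices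
  have hLX : 𝓛 Xm = (-kc) • Xm := by
    rw [h𝓛, hH]
    try simp only [hkc]
    ext i j
    fin_cases i <;> fin_cases j <;>
      simp [Xm, Ym, Zm, σm, σp, Matrix.mul_apply, Fin.sum_univ_two] <;> ring_nf <;>
      simp [Complex.I_sq] <;> ring
  have hLY : 𝓛 Ym = (-kc) • Ym + (A : ℂ) • Zm := by
    rw [h𝓛, hH]
    try simp only [hkc]
    ext i j
    fin_cases i <;> fin_cases j <;>
      simp [Xm, Ym, Zm, σm, σp, Matrix.mul_apply, Fin.sum_univ_two] <;> ring_nf <;>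
      simp [Complex.I_sq] <;> ring
  have hLZ : 𝓛 Zm = (-(A : ℂ)) • Ym + (-(γ : ℂ)) • Zm := by
    rw [h𝓛, hH]
    try simp only [hkc]
    ext i j
    fin_cases i <;> fin_cases j <;>
      simp [Xm, Ym, Zm, σm, σp, Matrix.mul_apply, Fin.sum_univ_two] <;> ring_nf <;>
      simp [Complex.I_sq] <;> ring
  -- powers of 𝓛
  have hLXn : ∀ n : ℕ, (𝓛 ^ n) Xm = ((-kc) ^ n) • Xm := by
    intro n
    induction n with
    | zero => simp
    | succ n ih =>
        rw [pow_succ, ContinuousLinearMap.mul_apply, hLX, map_smul, ih, smul_smul,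
          pow_succ]
        ring_nf
  have hPn : ∀ n : ℕ, ∃ a b d : ℂ,
      (𝓛 ^ n) Ym = a • Ym + b • Zm ∧ (𝓛 ^ n) Zm = (-b) • Ym + d • Zm ∧
        (kc - (γ:ℂ)) * b = (A:ℂ) * (d - a) := by
    intro n
    induction n with
    | zero => exact ⟨1, 0, 1, by simp, by simp, by ring⟩
    | succ n ih =>
        obtain ⟨a, b, d, h1, h2, h3⟩ := ih
        have hco : kc * b - (A:ℂ) * d = -((A:ℂ) * a - (γ:ℂ) * b) := by
          linear_combination h3
        refine ⟨-kc*a - (A:ℂ)*b, (A:ℂ)*a - (γ:ℂ)*b, -(A:ℂ)*b - (γ:ℂ)*d, ?_, ?_, ?_⟩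
        · rw [pow_succ', ContinuousLinearMap.mul_apply, h1, map_add, map_smul, map_smul,
            hLY, hLZ]
          module
        · rw [pow_succ', ContinuousLinearMap.mul_apply, h2, map_add, map_smul, map_smul,
            hLY, hLZ]
          rw [show (-((A:ℂ)*a - (γ:ℂ)*b)) = kc * b - (A:ℂ) * d from hco.symm]
          module
        · linear_combination (-(γ:ℂ)) * h3
  -- convert real smul to complex smul
  have hsmul : tg • 𝓛 = ((tg : ℂ)) • 𝓛 := by
    ext ρ : 1
    show tg • 𝓛 ρ = (tg : ℂ) • 𝓛 ρ
    ext i j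
    simp [Complex.real_smul]
  -- vanishing trace coefficients
  have hzero : ∀ P ρ' : M2, (∀ n : ℕ, Matrix.trace (P * ((𝓛 ^ n) ρ')) = 0) →
      Matrix.trace (P * (NormedSpace.exp (tg • 𝓛) ρ')) = 0 := by
    intro P ρ' hterm
    rw [hsmul, trace_exp_apply]
    have h0 : ∀ n : ℕ, ((tg:ℂ) ^ n * ((n.factorial : ℂ))⁻¹) * Matrix.trace (P * ((𝓛 ^ n) ρ')) = 0 :=
      fun n => by rw [hterm n, mul_zero]
    rw [tsum_congr h0, tsum_zero]
  have htr_eY : Matrix.trace (NormedSpace.exp (tg • 𝓛) Ym) = 0 := by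
    rw [← Matrix.one_mul (NormedSpace.exp (tg • 𝓛) Ym)]
    refine hzero _ _ fun n => ?_
    obtain ⟨a, b, d, h1, h2, h3⟩ := hPn n
    rw [Matrix.one_mul, h1]
    simp [Matrix.trace_add, Matrix.trace_smul, trYm, trZm]
  have htrX_eY : Matrix.trace (Xm * NormedSpace.exp (tg • 𝓛) Ym) = 0 := by
    refine hzero _ _ fun n => ?_
    obtain ⟨a, b, d, h1, h2, h3⟩ := hPn n
    rw [h1]
    simp [Matrix.mul_add, Matrix.mul_smul, Matrix.trace_add, Matrix.trace_smul, trXY, trXZ]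
  have htr_eZ : Matrix.trace (NormedSpace.exp (tg • 𝓛) Zm) = 0 := by
    rw [← Matrix.one_mul (NormedSpace.exp (tg • 𝓛) Zm)]
    refine hzero _ _ fun n => ?_
    obtain ⟨a, b, d, h1, h2, h3⟩ := hPn n
    rw [Matrix.one_mul, h2]
    simp [Matrix.trace_add, Matrix.trace_smul, trYm, trZm]
  have htrX_eZ : Matrix.trace (Xm * NormedSpace.exp (tg • 𝓛) Zm) = 0 := by
    refine hzero _ _ fun n => ?_
    obtain ⟨a, b, d, h1, h2, h3⟩ := hPn n
    rw [h2]
    simp [Matrix.mul_add, Matrix.mul_smul, Matrix.trace_add, Matrix.trace_smul, trXY, trXZ]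
  have htr_eX : Matrix.trace (NormedSpace.exp (tg • 𝓛) Xm) = 0 := by
    rw [← Matrix.one_mul (NormedSpace.exp (tg • 𝓛) Xm)]
    refine hzero _ _ fun n => ?_
    rw [Matrix.one_mul, hLXn n]
    simp [Matrix.trace_smul, trXm]
  have htrY_eX : Matrix.trace (Ym * NormedSpace.exp (tg • 𝓛) Xm) = 0 := by
    refine hzero _ _ fun n => ?_
    rw [hLXn n]
    simp [Matrix.mul_smul, Matrix.trace_smul, trYX]
  have htrZ_eX : Matrix.trace (Zm * NormedSpace.exp (tg • 𝓛) Xm) = 0 := by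
    refine hzero _ _ fun n => ?_
    rw [hLXn n]
    simp [Matrix.mul_smul, Matrix.trace_smul, trZX]
  -- the X coefficient of exp applied to X
  have htrX_eX : Matrix.trace (Xm * NormedSpace.exp (tg • 𝓛) Xm)
      = 2 * Complex.exp (-kc * (tg:ℂ)) := by
    rw [hsmul, trace_exp_apply]
    have h0 : ∀ n : ℕ, ((tg:ℂ) ^ n * ((n.factorial : ℂ))⁻¹) * Matrix.trace (Xm * ((𝓛 ^ n) Xm))
        = 2 * (((n.factorial : ℂ))⁻¹ • (-kc * (tg:ℂ)) ^ n) := by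
      intro n
      rw [hLXn n, Matrix.mul_smul, Matrix.trace_smul, trXX, smul_eq_mul, smul_eq_mul,
        mul_pow]
      ring
    rw [tsum_congr h0, tsum_mul_left]
    congr 1
    rw [Complex.exp_eq_exp_ℂ, NormedSpace.exp_eq_tsum ℂ]
  have hEXval : NormedSpace.exp (tg • 𝓛) Xm = Complex.exp (-kc * (tg:ℂ)) • Xm := by
    conv_lhs => rw [pauli_decomp (NormedSpace.exp (tg • 𝓛) Xm)]
    rw [htr_eX, htrY_eX, htrZ_eX, htrX_eX]
    simp
  -- decomposition of exp applied to Y and Z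
  have hEYval : NormedSpace.exp (tg • 𝓛) Ym
      = ((1/2 : ℂ) * Matrix.trace (Ym * NormedSpace.exp (tg • 𝓛) Ym)) • Ym
        + ((1/2 : ℂ) * Matrix.trace (Zm * NormedSpace.exp (tg • 𝓛) Ym)) • Zm := by
    conv_lhs => rw [pauli_decomp (NormedSpace.exp (tg • 𝓛) Ym)]
    rw [htr_eY, htrX_eY]
    simp
  have hEZval : NormedSpace.exp (tg • 𝓛) Zm
      = ((1/2 : ℂ) * Matrix.trace (Ym * NormedSpace.exp (tg • 𝓛) Zm)) • Ym
        + ((1/2 : ℂ) * Matrix.trace (Zm * NormedSpace.exp (tg • 𝓛) Zm)) • Zm := by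
    conv_lhs => rw [pauli_decomp (NormedSpace.exp (tg • 𝓛) Zm)]
    rw [htr_eZ, htrX_eZ]
    simp
  -- antisymmetry of the off-diagonal coefficients
  have hcross : Matrix.trace (Ym * NormedSpace.exp (tg • 𝓛) Zm)
      + Matrix.trace (Zm * NormedSpace.exp (tg • 𝓛) Ym) = 0 := by
    rw [hsmul, trace_exp_apply, trace_exp_apply,
      ← Summable.tsum_add (trace_exp_summable 𝓛 (tg:ℂ) Ym Zm) (trace_exp_summable 𝓛 (tg:ℂ) Zm Ym)]
    have h0 : ∀ n : ℕ,
        ((tg:ℂ) ^ n * ((n.factorial : ℂ))⁻¹) * Matrix.trace (Ym * ((𝓛 ^ n) Zm))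
          + ((tg:ℂ) ^ n * ((n.factorial : ℂ))⁻¹) * Matrix.trace (Zm * ((𝓛 ^ n) Ym)) = 0 := by
      intro n
      obtain ⟨a, b, d, h1, h2, h3⟩ := hPn n
      rw [h1, h2]
      simp [Matrix.mul_add, Matrix.mul_smul, Matrix.trace_add, Matrix.trace_smul,
        trYY, trYZ, trZY, trZZ]
    rw [tsum_congr h0, tsum_zero]
  -- the gate U
  have htgA : tg * A = Real.pi / 2 := by
    rw [htg]; field_simp
  have hUval : U = Ud := by
    rw [hU, hH, smul_smul]
    have hc : -Complex.I * (tg:ℂ) * ((A:ℂ)/2) = ((-(Real.pi/4) : ℝ) : ℂ) * Complex.I := by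
      have h2 : ((tg * A : ℝ) : ℂ) = ((Real.pi/2 : ℝ) : ℂ) := Complex.ofReal_inj.mpr htgA
      push_cast at h2 ⊢
      linear_combination (-Complex.I / 2) * h2
    rw [hc, exp_smul_Xm]
    have hch : Complex.cosh (((-(Real.pi/4) : ℝ) : ℂ) * Complex.I) = sC := by
      rw [Complex.cosh_mul_I, ← Complex.ofReal_cos, sC]
      norm_num [Real.cos_pi_div_four]
    have hsh : Complex.sinh (((-(Real.pi/4) : ℝ) : ℂ) * Complex.I) = -sC * Complex.I := by
      rw [Complex.sinh_mul_I, ← Complex.ofReal_sin, sC]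
      rw [show (-(Real.pi/4) : ℝ) = -(Real.pi/4) from rfl]
      rw [Real.sin_neg, Real.sin_pi_div_four]
      push_cast
      ring
    rw [hch, hsh, Ud]
  -- value of fx
  have hfx2 : (fx : ℂ) = Complex.exp (-kc * (tg:ℂ)) := by
    rw [hfx, hE, hEXval, hUval]
    rw [Matrix.mul_smul, Matrix.smul_mul, Matrix.mul_smul, Matrix.trace_smul, smul_eq_mul]
    linear_combination Complex.exp (-kc * (tg:ℂ)) * T1
  have hfxreal : fx = Real.exp (-(γ / 2 + 2 * γφ) * tg) := by
    have hcoe : ((Real.exp (-(γ / 2 + 2 * γφ) * tg) : ℝ) : ℂ) = Complex.exp (-kc * (tg:ℂ)) := by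
      rw [Complex.ofReal_exp]
      congr 1
      rw [hkc]
      push_cast
      ring
    exact_mod_cast hfx2.trans hcoe.symm
  -- values of fy and fz
  set sA : ℂ := (1/2 : ℂ) * Matrix.trace (Ym * NormedSpace.exp (tg • 𝓛) Ym) with hsA
  set sB : ℂ := (1/2 : ℂ) * Matrix.trace (Zm * NormedSpace.exp (tg • 𝓛) Ym) with hsB
  set sBz : ℂ := (1/2 : ℂ) * Matrix.trace (Ym * NormedSpace.exp (tg • 𝓛) Zm) with hsBz
  set sD : ℂ := (1/2 : ℂ) * Matrix.trace (Zm * NormedSpace.exp (tg • 𝓛) Zm) with hsD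
  have hfy2 : (fy : ℂ) = sB := by
    rw [hfy, hE, hEYval, hUval]
    rw [Matrix.mul_add, Matrix.add_mul, Matrix.mul_smul, Matrix.smul_mul,
      Matrix.mul_smul, Matrix.smul_mul, Matrix.mul_add, Matrix.trace_add,
      Matrix.mul_smul, Matrix.mul_smul, Matrix.trace_smul, Matrix.trace_smul,
      smul_eq_mul, smul_eq_mul]
    linear_combination sA * T2 + sB * T3
  have hfz2 : (fz : ℂ) = sB := by
    have hBzB : sBz = -sB := by
      rw [hsBz, hsB]
      linear_combination (1/2 : ℂ) * hcross
    rw [hfz, hE, hEZval, hUval]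
    rw [Matrix.mul_add, Matrix.add_mul, Matrix.mul_smul, Matrix.smul_mul,
      Matrix.mul_smul, Matrix.smul_mul, Matrix.mul_add, Matrix.trace_add,
      Matrix.mul_smul, Matrix.mul_smul, Matrix.trace_smul, Matrix.trace_smul,
      smul_eq_mul, smul_eq_mul]
    linear_combination sBz * T4 + sD * T5 - hBzB
  have hfyfz : fy = fz := by
    have : (fy : ℂ) = (fz : ℂ) := hfy2.trans hfz2.symm
    exact_mod_cast this
  refine ⟨hfxreal, hfyfz, fun hpos => ?_⟩
  have hlog : Real.log fx = -(γ / 2 + 2 * γφ) * tg := by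
    rw [hfxreal, Real.log_exp]
  constructor
  · rw [hfyfz, hlog]; ring
  · rw [hfyfz, hlog]; ring
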